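/- For every k ≥ 0, assuming each x_j is integrable, the conditional expectation of the state d steps ahead satisfies, almost surely, E[x_{k+d} | F_{k−1}] = A^d x_k + Σ_{i=1}^d A^{i−1} B u_{k−i}, where for negative indices u_{k−i} denotes the corresponding deterministic initial control. -/

import Mathlib

open MeasureTheory ProbabilityTheory Matrix

noncomputable section

/-- The σ-algebra `F_{k−1}`, with `F_{−1}` the trivial σ-algebra. -/
def Fm1 {Ω : Type*} (F : ℕ → MeasurableSpace Ω) : ℕ → MeasurableSpace Ω
  | 0 => ⊥
  | k + 1 => F k

/-- The control extended to all integer times: deterministic initial controls `uinit j`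
for `j < 0` and the adapted control `u j` for `j ≥ 0`. -/
def uext {mu : ℕ} {Ω : Type*} (uinit : ℤ → Fin mu → ℝ) (u : ℕ → Ω → Fin mu → ℝ)
    (j : ℤ) (w : Ω) : Fin mu → ℝ :=
  if 0 ≤ j then u j.toNat w else uinit j

/-- The state trajectory of `x_{k+1} = (A + ω_k Ā) x_k + (B + ω_k B̄) u_{k−d}`
with initial state `x0` and initial controls `uinit`. -/
def traj {n mu : ℕ} {Ω : Type*} (d : ℕ) (A Abar : Matrix (Fin n) (Fin n) ℝ)
    (B Bbar : Matrix (Fin n) (Fin mu) ℝ) (noise : ℕ → Ω → ℝ) (x0 : Fin n → ℝ)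
    (uinit : ℤ → Fin mu → ℝ) (u : ℕ → Ω → Fin mu → ℝ) : ℕ → Ω → Fin n → ℝ
  | 0, _ => x0
  | k + 1, w =>
      (A + noise k w • Abar).mulVec (traj d A Abar B Bbar noise x0 uinit u k w)
        + (B + noise k w • Bbar).mulVec (uext uinit u ((k : ℤ) - (d : ℤ)) w)



section helpers

variable {α : Type*} {m m0 : MeasurableSpace α} {μ : Measure α}

lemma my_condexp_clm {E F' : Type*} [NormedAddCommGroup E] [NormedSpace ℝ E] [CompleteSpace E]
    [NormedAddCommGroup F'] [NormedSpace ℝ F'] [CompleteSpace F']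
    (hm : m ≤ m0) [SigmaFinite (μ.trim hm)] (T : E →L[ℝ] F') {f : α → E}
    (hf : Integrable f μ) :
    μ[fun w => T (f w) | m] =ᵐ[μ] fun w => T ((μ[f|m]) w) := by
  refine (ae_eq_condExp_of_forall_setIntegral_eq hm (T.integrable_comp hf)
    (fun s _ _ => (T.integrable_comp integrable_condExp).integrableOn)
    (fun s hs hμs => ?_)
    ((T.continuous.comp_stronglyMeasurable stronglyMeasurable_condExp).aestronglyMeasurable)).symm
  rw [T.integral_comp_comm integrable_condExp.integrableOn,
    T.integral_comp_comm hf.integrableOn, setIntegral_condExp hm hf hs]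

lemma my_integrable_pi {ι : Type*} [Fintype ι] [DecidableEq ι] {f : α → ι → ℝ}
    (h : ∀ i, Integrable (fun a => f a i) μ) : Integrable f μ := by
  have hf : f = fun a => ∑ i : ι, (f a i) • (Pi.single i (1 : ℝ) : ι → ℝ) := by
    funext a j
    simp [Finset.sum_apply, Pi.single_apply]
  rw [hf]
  exact integrable_finset_sum _ fun i _ => (h i).smul_const _

def mulVecCLM {p q : ℕ} (M : Matrix (Fin p) (Fin q) ℝ) : (Fin q → ℝ) →L[ℝ] (Fin p → ℝ) :=
  LinearMap.toContinuousLinearMap M.mulVecLin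

@[simp] lemma mulVecCLM_apply {p q : ℕ} (M : Matrix (Fin p) (Fin q) ℝ) (x : Fin q → ℝ) :
    mulVecCLM M x = M.mulVec x := rfl

lemma my_meas_mulVec {Ω : Type*} {mΩ : MeasurableSpace Ω} {p q : ℕ}
    (M N : Matrix (Fin p) (Fin q) ℝ) {c : Ω → ℝ} {g : Ω → Fin q → ℝ}
    (hc : Measurable c) (hg : Measurable g) :
    Measurable fun w => (M + c w • N).mulVec (g w) := by
  rw [measurable_pi_iff]
  intro l
  simp only [Matrix.mulVec, dotProduct, Matrix.add_apply, Matrix.smul_apply, smul_eq_mul]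
  exact Finset.measurable_sum _ fun j _ =>
    (measurable_const.add (hc.mul measurable_const)).mul ((measurable_pi_apply j).comp hg)

end helpers

/-- For every `k ≥ 0`, assuming each `x_j` is integrable, the conditional
expectation of the state `d` steps ahead satisfies, almost surely,
`E[x_{k+d} | F_{k−1}] = A^d x_k + ∑_{i=1}^d A^{i−1} B u_{k−i}`, where for negative indices
`u_{k−i}` is the corresponding deterministic initial control. -/


theorem stmt4 {Ω : Type*} [MeasurableSpace Ω] (μ : Measure Ω) [IsProbabilityMeasure μ]
    (F : ℕ → MeasurableSpace Ω) (hF_mono : Monotone F)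
    (hF_le : ∀ k, F k ≤ ‹MeasurableSpace Ω›)
    (noise : ℕ → Ω → ℝ)
    (hnoise_meas : ∀ k, Measurable[F k] (noise k))
    (hnoise_int : ∀ k, Integrable (noise k) μ)
    (hnoise_indep : ∀ k, Indep (MeasurableSpace.comap (noise k) inferInstance) (Fm1 F k) μ)
    (hnoise_mean : ∀ k, ∫ w, noise k w ∂μ = 0)
    (n mu d : ℕ) (hn : 0 < n) (hmu : 0 < mu) (hd : 1 ≤ d)
    (A Abar : Matrix (Fin n) (Fin n) ℝ) (B Bbar : Matrix (Fin n) (Fin mu) ℝ)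
    (x0 : Fin n → ℝ) (uinit : ℤ → Fin mu → ℝ)
    -- the adapted, integrable control
    (u : ℕ → Ω → Fin mu → ℝ)
    (hu_adapted : ∀ k, StronglyMeasurable[Fm1 F k] (u k))
    (hu_int : ∀ k, Integrable (u k) μ)
    -- integrability of the state
    (hx_int : ∀ j, Integrable (traj d A Abar B Bbar noise x0 uinit u j) μ) :
    ∀ k : ℕ,
      μ[traj d A Abar B Bbar noise x0 uinit u (k + d) | Fm1 F k] =ᵐ[μ]
        fun w => (A ^ d).mulVec (traj d A Abar B Bbar noise x0 uinit u k w)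
          + ∑ i ∈ Finset.Icc 1 d,
              (A ^ (i - 1)).mulVec (B.mulVec (uext uinit u ((k : ℤ) - (i : ℤ)) w)) := by
  set X := traj d A Abar B Bbar noise x0 uinit u with hXdef
  have hFm1_le : ∀ j, Fm1 F j ≤ ‹MeasurableSpace Ω› := by
    intro j
    cases j with
    | zero => exact bot_le
    | succ i => exact hF_le i
  have hFm1_mono : Monotone (Fm1 F) := by
    intro a b hab
    cases a with
    | zero => exact bot_le
    | succ i =>
      cases b with
      | zero => exact absurd hab (by omega)
      | succ j => exact hF_mono (by omega)
  have huext_int : ∀ j : ℤ, Integrable (uext uinit u j) μ := by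
    intro j
    by_cases hj : 0 ≤ j
    · have : uext uinit u j = u j.toNat := by funext w; simp [uext, hj]
      rw [this]; exact hu_int _
    · have : uext uinit u j = fun _ => uinit j := by funext w; simp [uext, hj]
      rw [this]; exact integrable_const _
  have huext_meas : ∀ (j : ℤ) (k : ℕ), j < (k : ℤ) →
      StronglyMeasurable[Fm1 F k] (uext uinit u j) := by
    intro j k hj
    by_cases h0 : 0 ≤ j
    · have : uext uinit u j = u j.toNat := by funext w; simp [uext, h0]
      rw [this]
      exact (hu_adapted j.toNat).mono (hFm1_mono (by omega))
    · have : uext uinit u j = fun _ => uinit j := by funext w; simp [uext, h0]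
      rw [this]; exact stronglyMeasurable_const
  have hX_meas : ∀ j, StronglyMeasurable[Fm1 F j] (X j) := by
    intro j
    induction j with
    | zero => exact stronglyMeasurable_const
    | succ i ih =>
      have hxm : Measurable[Fm1 F (i + 1)] (X i) :=
        (ih.mono (hFm1_mono (Nat.le_succ i))).measurable
      have hum : Measurable[Fm1 F (i + 1)] (uext uinit u ((i : ℤ) - (d : ℤ))) :=
        (huext_meas _ _ (by omega)).measurable
      have hnm : Measurable[Fm1 F (i + 1)] (noise i) := hnoise_meas i
      exact Measurable.stronglyMeasurable
        ((my_meas_mulVec A Abar hnm hxm).add (my_meas_mulVec B Bbar hnm hum))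
  have hindep : ∀ (m' : ℕ) (g : Ω → ℝ), Measurable[Fm1 F m'] g →
      IndepFun (noise m') g μ := by
    intro m' g hg
    rw [IndepFun_iff_Indep]
    exact indep_of_indep_of_le_right (hnoise_indep m') hg.comap_le
  have hsmul_int : ∀ (m' : ℕ) (g : Ω → Fin n → ℝ), StronglyMeasurable[Fm1 F m'] g →
      Integrable g μ → Integrable (fun w => noise m' w • g w) μ := by
    intro m' g hgm hgi
    apply my_integrable_pi
    intro i
    have hgi_i : Integrable (fun w => g w i) μ := by
      simpa using (ContinuousLinearMap.proj (R := ℝ) (φ := fun _ : Fin n => ℝ) i).integrable_comp hgi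
    have hind : IndepFun (noise m') (fun w => g w i) μ :=
      hindep m' _ ((measurable_pi_apply i).comp hgm.measurable)
    have h2 : Integrable (noise m' * fun w => g w i) μ :=
      hind.integrable_mul (hnoise_int m')
        hgi_i
    exact h2
  have hzero : ∀ (k m' : ℕ), k ≤ m' → ∀ (g : Ω → Fin n → ℝ),
      StronglyMeasurable[Fm1 F m'] g → Integrable g μ →
      μ[(fun w => noise m' w • g w)|Fm1 F k] =ᵐ[μ] 0 := by
    intro k m' hkm g hgm hgi
    have hfint : Integrable (fun w => noise m' w • g w) μ := hsmul_int m' g hgm hgi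
    have hnoise_ce : μ[noise m'|Fm1 F m'] =ᵐ[μ] fun _ => 0 := by
      have h := condExp_indep_eq (μ := μ) (f := noise m')
        ((hnoise_meas m').comap_le.trans (hF_le m')) (hFm1_le m')
        (Measurable.stronglyMeasurable (measurable_iff_comap_le.2 le_rfl))
        (hnoise_indep m')
      simpa [hnoise_mean m'] using h
    have hinner : μ[(fun w => noise m' w • g w)|Fm1 F m'] =ᵐ[μ] 0 := by
      have hcomp : ∀ i, (fun w => (μ[(fun w => noise m' w • g w)|Fm1 F m']) w i)
          =ᵐ[μ] fun _ => 0 := by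
        intro i
        have h1 := my_condexp_clm (μ := μ) (hFm1_le m') (ContinuousLinearMap.proj i) hfint
        have h1' : μ[(fun w => noise m' w * g w i)|Fm1 F m'] =ᵐ[μ]
            fun w => (μ[(fun w => noise m' w • g w)|Fm1 F m']) w i := h1
        refine (h1'.symm.trans ?_)
        have hmc : (fun w => noise m' w * g w i) = (fun w => g w i) * noise m' := by
          funext w; simp [mul_comm]
        rw [hmc]
        have h3 := condExp_mul_of_stronglyMeasurable_left (μ := μ) (m := Fm1 F m')
          (f := fun w => g w i) (g := noise m')
          ((continuous_apply i).comp_stronglyMeasurable hgm)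
          (by have hgi_i : Integrable (fun w => g w i) μ := by
                simpa using (ContinuousLinearMap.proj (R := ℝ)
                  (φ := fun _ : Fin n => ℝ) i).integrable_comp hgi
              rw [← hmc]
              exact
                (hindep m' _ ((measurable_pi_apply i).comp hgm.measurable)).integrable_mul
                  (hnoise_int m') hgi_i)
          (hnoise_int m')
        refine h3.trans ?_
        filter_upwards [hnoise_ce] with w hw
        simp [hw]
      have hall : ∀ᵐ w ∂μ, ∀ i, (μ[(fun w => noise m' w • g w)|Fm1 F m']) w i = 0 :=
        ae_all_iff.2 hcomp
      filter_upwards [hall] with w hw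
      funext i
      exact hw i
    calc μ[(fun w => noise m' w • g w)|Fm1 F k]
        =ᵐ[μ] μ[μ[(fun w => noise m' w • g w)|Fm1 F m']|Fm1 F k] :=
          (condExp_condExp_of_le (hFm1_mono hkm) (hFm1_le m')).symm
      _ =ᵐ[μ] μ[(0 : Ω → Fin n → ℝ)|Fm1 F k] := condExp_congr_ae hinner
      _ = 0 := condExp_zero
  have key : ∀ (k m' : ℕ), k ≤ m' → (m' : ℤ) - (d : ℤ) < (k : ℤ) →
      μ[X (m' + 1)|Fm1 F k] =ᵐ[μ]
        fun w => A.mulVec ((μ[X m'|Fm1 F k]) w)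
          + B.mulVec (uext uinit u ((m' : ℤ) - (d : ℤ)) w) := by
    intro k m' hkm hmd
    set v := uext uinit u ((m' : ℤ) - (d : ℤ)) with hv
    have hvm : StronglyMeasurable[Fm1 F k] v := huext_meas _ _ hmd
    have hvm' : StronglyMeasurable[Fm1 F m'] v := hvm.mono (hFm1_mono hkm)
    have hvi : Integrable v μ := huext_int _
    have ha : Integrable (fun w => A.mulVec (X m' w)) μ := by
      simpa using (mulVecCLM A).integrable_comp (hx_int m')
    have hAbarX_m : StronglyMeasurable[Fm1 F m'] (fun w => Abar.mulVec (X m' w)) := by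
      have := (mulVecCLM Abar).continuous.comp_stronglyMeasurable (hX_meas m')
      simpa using this
    have hAbarX_i : Integrable (fun w => Abar.mulVec (X m' w)) μ := by
      simpa using (mulVecCLM Abar).integrable_comp (hx_int m')
    have hb : Integrable (fun w => noise m' w • Abar.mulVec (X m' w)) μ :=
      hsmul_int m' _ hAbarX_m hAbarX_i
    have hc : Integrable (fun w => B.mulVec (v w)) μ := by
      simpa using (mulVecCLM B).integrable_comp hvi
    have hBbarv_m : StronglyMeasurable[Fm1 F m'] (fun w => Bbar.mulVec (v w)) := by
      have := (mulVecCLM Bbar).continuous.comp_stronglyMeasurable hvm'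
      simpa using this
    have hBbarv_i : Integrable (fun w => Bbar.mulVec (v w)) μ := by
      simpa using (mulVecCLM Bbar).integrable_comp hvi
    have he : Integrable (fun w => noise m' w • Bbar.mulVec (v w)) μ :=
      hsmul_int m' _ hBbarv_m hBbarv_i
    have hexp : X (m' + 1) = (fun w => A.mulVec (X m' w))
        + (fun w => noise m' w • Abar.mulVec (X m' w))
        + ((fun w => B.mulVec (v w)) + fun w => noise m' w • Bbar.mulVec (v w)) := by
      funext w
      simp only [hXdef, traj, Pi.add_apply, Matrix.add_mulVec, Matrix.smul_mulVec, hv]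
    have hb0 : μ[(fun w => noise m' w • Abar.mulVec (X m' w))|Fm1 F k] =ᵐ[μ] 0 :=
      hzero k m' hkm _ hAbarX_m hAbarX_i
    have he0 : μ[(fun w => noise m' w • Bbar.mulVec (v w))|Fm1 F k] =ᵐ[μ] 0 :=
      hzero k m' hkm _ hBbarv_m hBbarv_i
    have hcx : μ[(fun w => B.mulVec (v w))|Fm1 F k] = fun w => B.mulVec (v w) :=
      condExp_of_stronglyMeasurable (hFm1_le k)
        (by simpa using (mulVecCLM B).continuous.comp_stronglyMeasurable hvm) hc
    have hax : μ[(fun w => A.mulVec (X m' w))|Fm1 F k] =ᵐ[μ]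
        fun w => A.mulVec ((μ[X m'|Fm1 F k]) w) := by
      have h := my_condexp_clm (μ := μ) (hFm1_le k) (mulVecCLM A) (hx_int m')
      simpa using h
    rw [hexp]
    refine ((condExp_add (ha.add hb) (hc.add he) _).trans
      ((condExp_add ha hb _).add (condExp_add hc he _))).trans ?_
    rw [hcx]
    filter_upwards [hb0, he0, hax] with w h1 h2 h3
    simp only [Pi.add_apply, h1, h2, h3, Pi.zero_apply, add_zero]
  have main : ∀ k i, i ≤ d → μ[X (k + i)|Fm1 F k] =ᵐ[μ]
      fun w => (A ^ i).mulVec (X k w)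
        + ∑ j ∈ Finset.range i,
            (A ^ j).mulVec (B.mulVec (uext uinit u
              ((k : ℤ) + (i : ℤ) - 1 - (j : ℤ) - (d : ℤ)) w)) := by
    intro k i
    induction i with
    | zero =>
      intro _
      rw [Nat.add_zero, condExp_of_stronglyMeasurable (hFm1_le k) (hX_meas k) (hx_int k)]
      refine ae_of_all _ fun w => ?_
      simp [Matrix.one_mulVec]
    | succ i ih =>
      intro hid
      have hkey := key k (k + i) (by omega) (by push_cast; omega)
      refine hkey.trans ?_
      filter_upwards [ih (by omega)] with w hw
      rw [hw]
      rw [Matrix.mulVec_add, Finset.sum_range_succ']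
      have hmap : A.mulVec (∑ j ∈ Finset.range i,
          (A ^ j).mulVec (B.mulVec (uext uinit u
            ((k : ℤ) + (i : ℤ) - 1 - (j : ℤ) - (d : ℤ)) w)))
          = ∑ j ∈ Finset.range i, A.mulVec ((A ^ j).mulVec (B.mulVec (uext uinit u
            ((k : ℤ) + (i : ℤ) - 1 - (j : ℤ) - (d : ℤ)) w))) := by
        rw [← Matrix.mulVecLin_apply, map_sum]
        simp only [Matrix.mulVecLin_apply]
      rw [hmap]
      have hsum : ∑ j ∈ Finset.range i,
          (A ^ (j + 1)).mulVec (B.mulVec (uext uinit u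
            ((k : ℤ) + ((i : ℕ) + 1 : ℕ) - 1 - ((j : ℕ) + 1 : ℕ) - (d : ℤ)) w))
          = ∑ j ∈ Finset.range i, A.mulVec ((A ^ j).mulVec (B.mulVec (uext uinit u
            ((k : ℤ) + (i : ℤ) - 1 - (j : ℤ) - (d : ℤ)) w))) := by
        refine Finset.sum_congr rfl fun j _ => ?_
        have hidx : ((k : ℤ) + ((i : ℕ) + 1 : ℕ) - 1 - ((j : ℕ) + 1 : ℕ) - (d : ℤ))
            = (k : ℤ) + (i : ℤ) - 1 - (j : ℤ) - (d : ℤ) := by push_cast; ring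
        rw [hidx]
        rw [pow_succ', ← Matrix.mulVec_mulVec]
      rw [hsum]
      have hidx0 : ((k : ℤ) + ((i : ℕ) + 1 : ℕ) - 1 - ((0 : ℕ) : ℤ) - (d : ℤ))
          = ((k + i : ℕ) : ℤ) - (d : ℤ) := by push_cast; ring
      have hpow : (A ^ (i + 1)).mulVec (X k w) = A.mulVec ((A ^ i).mulVec (X k w)) := by
        simp only [Matrix.mulVec_mulVec]
        rw [← pow_succ']
      rw [hidx0, hpow, pow_zero, Matrix.one_mulVec]
      abel
  intro k
  have h := main k d le_rfl
  refine h.trans (ae_of_all _ fun w => ?_)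
  dsimp only
  congr 1
  rw [show Finset.Icc 1 d = Finset.Ico 1 (d + 1) from (Finset.Ico_add_one_right_eq_Icc 1 d),
    Finset.sum_Ico_eq_sum_range]
  simp only [Nat.add_sub_cancel]
  refine Finset.sum_congr rfl fun j _ => ?_
  have h1 : 1 + j - 1 = j := by omega
  have h2 : (k : ℤ) - ((1 + j : ℕ) : ℤ) = (k : ℤ) + (d : ℤ) - 1 - (j : ℤ) - (d : ℤ) := by
    push_cast; ring
  rw [h1, h2]

end
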